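/- Let A be a finite-dimensional Frobenius algebra over a field K with Frobenius comultiplication δ and counit ε. Let M be a right A-comodule with structure map ∇ : M → M ⊗ A, let m_∇ : M ⊗ A → M be the induced module structure (m_∇ = (id_M ⊗ ε) ∘ (id_M ⊗ μ) ∘ (∇ ⊗ id_A)), and let ∇_{m_∇} : M → M ⊗ A be the comodule structure induced from m_∇ (∇_{m_∇} = (m_∇ ⊗ id_A) ∘ (id_M ⊗ δ) ∘ (x ↦ x ⊗ 1_A)). Then ∇_{m_∇} = ∇. -/
import Mathlib


open TensorProduct

/-- The comodule structure map `∇_m = (m ⊗ id_A) ∘ (id_M ⊗ δ) ∘ (x ↦ x ⊗ 1_A)`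
induced on a right `A`-module `(M, m)` by the Frobenius comultiplication `δ`. -/
noncomputable def nablaOf {K : Type*} [Field K] {A : Type*} [Ring A] [Algebra K A]
    {M : Type*} [AddCommGroup M] [Module K M]
    (δ : A →ₗ[K] A ⊗[K] A) (m : M ⊗[K] A →ₗ[K] M) : M →ₗ[K] M ⊗[K] A :=
  (TensorProduct.map m (LinearMap.id : A →ₗ[K] A)) ∘ₗ
    (TensorProduct.assoc K M A A).symm.toLinearMap ∘ₗ
      (TensorProduct.map (LinearMap.id : M →ₗ[K] M) δ) ∘ₗ
        ((TensorProduct.mk K M A).flip 1)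

/-- The module structure map `m_∇ = (id_M ⊗ ε) ∘ (id_M ⊗ μ) ∘ (∇ ⊗ id_A)`
induced on a right `A`-comodule `(M, ∇)` by the counit `ε` of the Frobenius
comultiplication, with `μ : A ⊗ A → A` the multiplication. -/
noncomputable def modOf {K : Type*} [Field K] {A : Type*} [Ring A] [Algebra K A]
    {M : Type*} [AddCommGroup M] [Module K M]
    (ε : A →ₗ[K] K) (co : M →ₗ[K] M ⊗[K] A) : M ⊗[K] A →ₗ[K] M :=
  (TensorProduct.rid K M).toLinearMap ∘ₗ
    (TensorProduct.map (LinearMap.id : M →ₗ[K] M) ε) ∘ₗ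
      (TensorProduct.map (LinearMap.id : M →ₗ[K] M) (LinearMap.mul' K A)) ∘ₗ
        (TensorProduct.assoc K M A A).toLinearMap ∘ₗ
          (TensorProduct.map co (LinearMap.id : A →ₗ[K] A))

/-- Starting from a right `A`-comodule `(M, ∇)` over a Frobenius
algebra, forming the induced module structure `m_∇` and then the comodule structure
`∇_{m_∇}` induced by `m_∇` recovers `∇`: `∇_{m_∇} = ∇`. -/
theorem comodule_module_comodule
    {K : Type*} [Field K] {A : Type*} [Ring A] [Algebra K A] [FiniteDimensional K A]
    (δ : A →ₗ[K] A ⊗[K] A) (ε : A →ₗ[K] K)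
    (hcoassoc : ∀ a : A,
      (TensorProduct.assoc K A A A)
          ((TensorProduct.map δ (LinearMap.id : A →ₗ[K] A)) (δ a)) =
        (TensorProduct.map (LinearMap.id : A →ₗ[K] A) δ) (δ a))
    (hcounit_l : ∀ a : A,
      (TensorProduct.lid K A)
          ((TensorProduct.map ε (LinearMap.id : A →ₗ[K] A)) (δ a)) = a)
    (hcounit_r : ∀ a : A,
      (TensorProduct.rid K A)
          ((TensorProduct.map (LinearMap.id : A →ₗ[K] A) ε) (δ a)) = a)
    (hbimod : ∀ a x b : A,
      δ (a * x * b) =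
        (TensorProduct.map (LinearMap.mulLeft K a) (LinearMap.mulRight K b)) (δ x))
    {M : Type*} [AddCommGroup M] [Module K M] (co : M →ₗ[K] M ⊗[K] A)
    (hco_coassoc : ∀ x : M,
      (TensorProduct.assoc K M A A)
          ((TensorProduct.map co (LinearMap.id : A →ₗ[K] A)) (co x)) =
        (TensorProduct.map (LinearMap.id : M →ₗ[K] M) δ) (co x))
    (hco_counit : ∀ x : M,
      (TensorProduct.rid K M)
          ((TensorProduct.map (LinearMap.id : M →ₗ[K] M) ε) (co x)) = x) :
    nablaOf δ (modOf ε co) = co := by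
  -- δ b = (b·) applied to δ 1
  have key : ∀ b : A, δ b = (TensorProduct.map (LinearMap.mulLeft K b)
      (LinearMap.id : A →ₗ[K] A)) (δ 1) := by
    intro b
    have h := hbimod b 1 1
    simpa [LinearMap.mulRight_one] using h
  ext x
  simp only [nablaOf, modOf, LinearMap.coe_comp, Function.comp_apply,
    LinearMap.flip_apply, TensorProduct.mk_apply, TensorProduct.map_tmul,
    LinearMap.id_coe, id_eq, LinearEquiv.coe_coe]
  obtain ⟨T, hT⟩ := TensorProduct.exists_finset (δ 1)
  obtain ⟨S, hS⟩ := TensorProduct.exists_finset (co x)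
  have fact : ∀ b : A, ∑ p ∈ T, ε (b * p.1) • p.2 = b := by
    intro b
    have h := hcounit_l b
    rw [key b, hT] at h
    simpa [map_sum] using h
  have hm : ∀ e : A, (modOf ε co) (x ⊗ₜ[K] e) = ∑ q ∈ S, ε (q.2 * e) • q.1 := by
    intro e
    simp only [modOf, LinearMap.coe_comp, Function.comp_apply, TensorProduct.map_tmul,
      LinearMap.id_coe, id_eq, LinearEquiv.coe_coe]
    rw [hS, TensorProduct.sum_tmul]
    simp [TensorProduct.assoc_tmul, LinearMap.mul'_apply, TensorProduct.rid_tmul]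
  calc (TensorProduct.map (modOf ε co) (LinearMap.id : A →ₗ[K] A))
        ((TensorProduct.assoc K M A A).symm (x ⊗ₜ[K] δ 1))
      = ∑ p ∈ T, (modOf ε co) (x ⊗ₜ[K] p.1) ⊗ₜ[K] p.2 := by
        rw [hT, TensorProduct.tmul_sum, map_sum, map_sum]
        simp [TensorProduct.assoc_symm_tmul]
    _ = ∑ q ∈ S, ∑ p ∈ T, q.1 ⊗ₜ[K] (ε (q.2 * p.1) • p.2) := by
        rw [Finset.sum_comm]
        refine Finset.sum_congr rfl fun p _ => ?_
        rw [hm, TensorProduct.sum_tmul]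
        refine Finset.sum_congr rfl fun q _ => ?_
        rw [TensorProduct.smul_tmul]
    _ = ∑ q ∈ S, q.1 ⊗ₜ[K] q.2 := by
        refine Finset.sum_congr rfl fun q _ => ?_
        rw [← TensorProduct.tmul_sum, fact]
    _ = co x := hS.symm
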